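/- For every ν > 0, every a ≥ 0, every integer k with k ≠ 0, all real numbers η and l, and every t ≥ 0, one has exp(−ν (2π)² ∫₀^t (k² + (η − k τ)² + l²) dτ) ≤ exp((2/(3π)) a^{3/2}) · exp(−a ν^{1/3} t). (Enhanced dissipation estimate for the heat semigroup in sheared coordinates at a nonzero x-frequency.) -/

import Mathlib

set_option maxHeartbeats 1000000


/-- Enhanced dissipation estimate for the heat semigroup in sheared coordinates at a
nonzero x-frequency: for every `ν > 0`, `a ≥ 0`, every nonzero integer `k`,
all real `η`, `l` and every `t ≥ 0`,
`exp(−ν (2π)² ∫₀^t (k² + (η − k τ)² + l²) dτ) ≤ exp((2/(3π)) a^{3/2}) · exp(−a ν^{1/3} t)`. -/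
theorem stmt1 (ν a : ℝ) (hν : 0 < ν) (ha : 0 ≤ a) (k : ℤ) (hk : k ≠ 0) (η l t : ℝ)
    (ht : 0 ≤ t) :
    Real.exp (-(ν * (2 * Real.pi) ^ 2 *
        ∫ τ in (0:ℝ)..t, ((k : ℝ) ^ 2 + (η - (k : ℝ) * τ) ^ 2 + l ^ 2)))
      ≤ Real.exp ((2 / (3 * Real.pi)) * a ^ ((3:ℝ)/2)) *
        Real.exp (-(a * ν ^ ((1:ℝ)/3) * t)) := by
  have hπ : (0:ℝ) < Real.pi := Real.pi_pos
  -- compute the integral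
  have hI : (∫ τ in (0:ℝ)..t, ((k : ℝ) ^ 2 + (η - (k : ℝ) * τ) ^ 2 + l ^ 2))
      = ((k:ℝ)^2 + η^2 + l^2) * t - η * (k:ℝ) * t^2 + (k:ℝ)^2 * t^3 / 3 := by
    have h := intervalIntegral.integral_eq_sub_of_hasDerivAt
      (f := fun τ : ℝ => ((k:ℝ)^2 + η^2 + l^2) * τ - η * (k:ℝ) * τ^2 + (k:ℝ)^2 * τ^3 / 3)
      (f' := fun τ : ℝ => (k : ℝ) ^ 2 + (η - (k : ℝ) * τ) ^ 2 + l ^ 2)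
      (a := 0) (b := t) ?_ ?_
    · simpa using h
    · intro x hx
      have h1 : HasDerivAt (fun τ : ℝ => ((k:ℝ)^2 + η^2 + l^2) * τ - η * (k:ℝ) * τ^2 + (k:ℝ)^2 * τ^3 / 3)
          (((k:ℝ)^2 + η^2 + l^2) * 1 - η * (k:ℝ) * (2 * x) + (k:ℝ)^2 * (3 * x^2) / 3) x := by
        have hid := hasDerivAt_id x
        have hp2 : HasDerivAt (fun τ : ℝ => τ ^ 2) (2 * x) x := by
          simpa using hasDerivAt_pow 2 x
        have hp3 : HasDerivAt (fun τ : ℝ => τ ^ 3) (3 * x ^ 2) x := by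
          simpa using hasDerivAt_pow 3 x
        have := (((hid.const_mul (((k:ℝ)^2 + η^2 + l^2))).sub
          (hp2.const_mul (η * (k:ℝ)))).add ((hp3.const_mul ((k:ℝ)^2)).div_const 3))
        convert this using 1
        all_goals first | rfl | ring
      convert h1 using 1
      all_goals first | rfl | ring
    · exact (Continuous.intervalIntegrable (by fun_prop) 0 t)
  rw [hI, ← Real.exp_add, Real.exp_le_exp]
  set ε := ν ^ ((1:ℝ)/3) with hεdef
  have hε : 0 < ε := Real.rpow_pos_of_pos hν _
  have hε3 : ε ^ 3 = ν := by
    rw [hεdef, ← Real.rpow_natCast (ν ^ ((1:ℝ)/3)) 3, ← Real.rpow_mul hν.le]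
    norm_num
  set b := a ^ ((1:ℝ)/2) with hbdef
  have hb : 0 ≤ b := Real.rpow_nonneg ha _
  have hb2 : b ^ 2 = a := by
    rw [hbdef, ← Real.rpow_natCast (a ^ ((1:ℝ)/2)) 2, ← Real.rpow_mul ha]
    norm_num
  have hb3 : b ^ 3 = a ^ ((3:ℝ)/2) := by
    rw [hbdef, ← Real.rpow_natCast (a ^ ((1:ℝ)/2)) 3, ← Real.rpow_mul ha]
    norm_num
  rw [← hb3]
  have hk2 : (1:ℝ) ≤ (k:ℝ)^2 := by
    have : (1:ℤ) ≤ |k| := Int.one_le_abs hk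
    have h2 : (1:ℝ) ≤ |(k:ℝ)| := by exact_mod_cast this
    nlinarith [abs_nonneg (k:ℝ), sq_abs (k:ℝ)]
  -- key Young inequality: 3π b² ε t ≤ 2 b³ + π³ ε³ t³
  have key : 3 * Real.pi * (b^2 * ε * t) ≤ 2 * b^3 + Real.pi^3 * ε^3 * t^3 := by
    nlinarith [mul_nonneg (sq_nonneg (Real.pi * ε * t - b))
      (by positivity : (0:ℝ) ≤ Real.pi * ε * t + 2 * b)]
  have key2 : a * ε * t ≤ 2 / (3 * Real.pi) * b^3 + Real.pi^2 / 3 * (ν * t^3) := by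
    have h3 : (0:ℝ) < 3 * Real.pi := by positivity
    rw [← hb2, ← mul_le_mul_iff_right₀ h3]
    calc 3 * Real.pi * (b^2 * ε * t) ≤ 2 * b^3 + Real.pi^3 * ε^3 * t^3 := key
      _ = 3 * Real.pi * (2 / (3 * Real.pi) * b^3 + Real.pi^2 / 3 * (ν * t^3)) := by
          rw [hε3]; field_simp
  -- the integral dominates t³/12
  have hIge : t^3 / 12 ≤ ((k:ℝ)^2 + η^2 + l^2) * t - η * (k:ℝ) * t^2 + (k:ℝ)^2 * t^3 / 3 := by
    nlinarith [mul_nonneg ht (sq_nonneg (η - (k:ℝ) * t / 2)),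
      mul_nonneg ht (sub_nonneg.mpr hk2),
      mul_nonneg (pow_nonneg ht 3) (sub_nonneg.mpr hk2),
      mul_nonneg ht (sq_nonneg l)]
  have hfin : 0 ≤ ν * (2 * Real.pi) ^ 2 *
      ((((k:ℝ)^2 + η^2 + l^2) * t - η * (k:ℝ) * t^2 + (k:ℝ)^2 * t^3 / 3) - t^3 / 12) :=
    mul_nonneg (by positivity) (sub_nonneg.mpr hIge)
  nlinarith [key2, hfin, sq_nonneg Real.pi]
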